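/- Let v, w : ℝ^m → ℝ^m be continuously differentiable vector fields with vanishing Lie bracket, [v, w](x) = 0 for all x, let ψ be a global flow of w such that ψ(ε, ·) is continuously differentiable in the space variable for each ε, and let π : ℝ^m → ℝ^n be a differentiable map invariant under w, i.e., Dπ(x)(w(x)) = 0 for all x. Then the projected velocity is constant along the orbits of w: for all ε ∈ ℝ and x ∈ ℝ^m, Dπ(ψ(ε, x))(v(ψ(ε, x))) = Dπ(x)(v(x)). In particular, any G-invariant function for the symmetry group generated by w assigns the same projected dynamics to all points on a group orbit. -/

import Mathlib

open Set Metric intervalIntegral Asymptotics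

set_option maxHeartbeats 1600000

section AuxLemmas
open Real

/-- Core estimate: one-sided derivative (from the right, at 0) of `δ ↦ D(ψ δ)(y) c`
equals `Dw(y) c`. -/
lemma pushforward_hasDerivWithinAt_Ici {m : ℕ}
    (w : (Fin m → ℝ) → (Fin m → ℝ)) (hw : ContDiff ℝ 1 w)
    (ψ : ℝ → (Fin m → ℝ) → (Fin m → ℝ))
    (hψ0 : ∀ x, ψ 0 x = x)
    (hψflow : ∀ x t, HasDerivAt (fun s => ψ s x) (w (ψ t x)) t)
    (hψsmooth : ∀ ε : ℝ, ContDiff ℝ 1 (ψ ε))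
    (y c : Fin m → ℝ) :
    HasDerivWithinAt (fun δ => fderiv ℝ (ψ δ) y c) (fderiv ℝ w y c) (Ici (0:ℝ)) 0 := by
  have hwd : Differentiable ℝ w := hw.differentiable one_ne_zero
  have hwc : Continuous w := hwd.continuous
  have hDwc : Continuous (fderiv ℝ w) := hw.continuous_fderiv one_ne_zero
  have htraj : ∀ z, Continuous fun s => ψ s z := by
    intro z
    have hd : Differentiable ℝ (fun s => ψ s z) := fun t => (hψflow z t).differentiableAt
    exact hd.continuous
  -- bound L for ‖Dw‖ on the unit ball around y
  obtain ⟨L₀, hL₀⟩ := (isCompact_closedBall y 1).exists_bound_of_continuousOn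
    hDwc.continuousOn
  set L := max L₀ 0 with hLdef
  have hL0 : 0 ≤ L := le_max_right _ _
  have hLb : ∀ ζ ∈ closedBall y 1, ‖fderiv ℝ w ζ‖ ≤ L := fun ζ hζ =>
    (hL₀ ζ hζ).trans (le_max_left _ _)
  have hexpL1 : (1:ℝ) ≤ exp L := Real.one_le_exp hL0
  have hlip : ∀ a ∈ closedBall y 1, ∀ b ∈ closedBall y 1, ‖w b - w a‖ ≤ L * ‖b - a‖ := by
    intro a ha b hb
    exact (convex_closedBall y 1).norm_image_sub_le_of_norm_fderiv_le
      (fun ζ _ => hwd ζ) hLb ha hb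
  -- fundamental theorem of calculus for the flow
  have hFTC : ∀ (z : Fin m → ℝ) (δ : ℝ), ψ δ z - z = ∫ s in (0:ℝ)..δ, w (ψ s z) := by
    intro z δ
    have h := intervalIntegral.integral_eq_sub_of_hasDerivAt
      (f := fun s => ψ s z) (f' := fun s => w (ψ s z))
      (fun t _ => hψflow z t)
      ((hwc.comp (htraj z)).intervalIntegrable 0 δ)
    rw [h]; simp [hψ0]
  rw [hasDerivWithinAt_iff_isLittleO, isLittleO_iff]
  intro C hC
  set ε₂ := C / (‖c‖ + 1) with hε₂def
  have hε₂ : 0 < ε₂ := div_pos hC (by positivity)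
  set ε₁ := ε₂ / (2 * (exp L + 1)) with hε₁def
  have hε₁ : 0 < ε₁ := div_pos hε₂ (by positivity)
  -- radius r of continuity of Dw around y
  obtain ⟨r₀, hr₀, hr₀prop⟩ : ∃ r₀ > 0, ∀ ζ, dist ζ y < r₀ →
      ‖fderiv ℝ w ζ - fderiv ℝ w y‖ < ε₁ := by
    obtain ⟨d, hd, hprop⟩ := Metric.continuousAt_iff.mp (hDwc.continuousAt) ε₁ hε₁
    exact ⟨d, hd, fun ζ h => by simpa [dist_eq_norm] using hprop h⟩
  set r := min (r₀ / 2) 1 with hrdef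
  have hr : 0 < r := lt_min (by linarith) one_pos
  have hr1 : r ≤ 1 := min_le_right _ _
  have hDwr : ∀ ζ ∈ closedBall y r, ‖fderiv ℝ w ζ - fderiv ℝ w y‖ ≤ ε₁ := by
    intro ζ hζ
    have : dist ζ y < r₀ := lt_of_le_of_lt (mem_closedBall.mp hζ)
      (lt_of_le_of_lt (min_le_left _ _) (by linarith))
    exact (hr₀prop ζ this).le
  -- quadratic remainder estimate on closedBall y r
  have h3 : ∀ a ∈ closedBall y r, ∀ b ∈ closedBall y r,
      ‖w b - w a - fderiv ℝ w y (b - a)‖ ≤ ε₁ * ‖b - a‖ := by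
    intro a ha b hb
    have hdiff : ∀ ζ ∈ closedBall y r,
        DifferentiableAt ℝ (fun z => w z - fderiv ℝ w y z) ζ := fun ζ _ =>
      (hwd ζ).sub (fderiv ℝ w y).differentiable.differentiableAt
    have hfd : ∀ ζ ∈ closedBall y r,
        ‖fderiv ℝ (fun z => w z - fderiv ℝ w y z) ζ‖ ≤ ε₁ := by
      intro ζ hζ
      have heq : fderiv ℝ (fun z => w z - fderiv ℝ w y z) ζ
          = fderiv ℝ w ζ - fderiv ℝ w y :=
        ((hwd ζ).hasFDerivAt.sub (fderiv ℝ w y).hasFDerivAt).fderiv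
      rw [heq]; exact hDwr ζ hζ
    have := (convex_closedBall y r).norm_image_sub_le_of_norm_fderiv_le hdiff hfd ha hb
    calc ‖w b - w a - fderiv ℝ w y (b - a)‖
        = ‖(w b - fderiv ℝ w y b) - (w a - fderiv ℝ w y a)‖ := by
          rw [map_sub]; congr 1; abel
      _ ≤ ε₁ * ‖b - a‖ := this
  -- δ₀
  obtain ⟨η, hη, hηprop⟩ : ∃ η > 0, ∀ s : ℝ, |s| < η → dist (ψ s y) y < r / 4 := by
    obtain ⟨η, hη, hp⟩ := Metric.continuousAt_iff.mp ((htraj y).continuousAt (x := 0))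
      (r / 4) (by positivity)
    refine ⟨η, hη, fun s hs => ?_⟩
    have := hp (by simpa [Real.dist_eq] using hs)
    simpa [hψ0] using this
  set δ₀ := min (η / 2) (min 1 (ε₂ / (2 * (L ^ 2 * exp L + 1)))) with hδ₀def
  have hδ₀pos : 0 < δ₀ := by
    apply lt_min (by linarith)
    exact lt_min one_pos (by positivity)
  have hδ₀1 : δ₀ ≤ 1 := le_trans (min_le_right _ _) (min_le_left _ _)
  have hδ₀η : δ₀ < η := lt_of_le_of_lt (min_le_left _ _) (by linarith)
  have hδ₀ε : δ₀ * (L ^ 2 * exp L) ≤ ε₂ / 2 := by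
    have h1 : δ₀ ≤ ε₂ / (2 * (L ^ 2 * exp L + 1)) :=
      le_trans (min_le_right _ _) (min_le_right _ _)
    have h2 : (0:ℝ) < L ^ 2 * exp L + 1 := by positivity
    have h3 : δ₀ * (L ^ 2 * exp L + 1) ≤ ε₂ / 2 := by
      calc δ₀ * (L ^ 2 * exp L + 1) ≤ (ε₂ / (2 * (L ^ 2 * exp L + 1))) * (L ^ 2 * exp L + 1) :=
            mul_le_mul_of_nonneg_right h1 h2.le
        _ = ε₂ / 2 := by field_simp
    nlinarith [hδ₀pos]
  have hψyconf : ∀ s ∈ Icc (0:ℝ) δ₀, ψ s y ∈ closedBall y (r / 4) := by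
    intro s hs
    exact mem_closedBall.mpr (hηprop s (by rw [abs_of_nonneg hs.1]; linarith [hs.2])).le
  set ρ := r / (4 * exp L) with hρdef
  have hρ : 0 < ρ := by positivity
  have hρr4 : ρ ≤ r / 4 := by
    rw [hρdef, div_le_div_iff₀ (by positivity) (by positivity)]
    nlinarith [hr.le, hexpL1]
  -- Grönwall + confinement by continuous induction
  have hGRON : ∀ z ∈ closedBall y ρ, ∀ s ∈ Icc (0:ℝ) δ₀,
      dist (ψ s z) (ψ s y) ≤ dist z y * exp (L * s) := by
    intro z hz
    set S := {s : ℝ | dist (ψ s z) (ψ s y) ≤ dist z y * exp (L * s)} with hSdef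
    have hzy : dist z y ≤ ρ := mem_closedBall.mp hz
    have hSclosed : IsClosed S := isClosed_le ((htraj z).dist (htraj y))
      (by fun_prop)
    have key : Icc (0:ℝ) δ₀ ⊆ S := by
      apply (hSclosed.inter isClosed_Icc).Icc_subset_of_forall_mem_nhdsWithin
      · show dist (ψ 0 z) (ψ 0 y) ≤ dist z y * exp (L * 0)
        simp [hψ0]
      · rintro x ⟨hxS, hx0, hxδ⟩
        -- at x, the perturbed trajectory is within r/2 of y
        have hdx : dist (ψ x z) (ψ x y) ≤ r / 4 := by
          have h1 : dist z y * exp (L * x) ≤ ρ * exp L := by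
            apply mul_le_mul hzy _ (exp_nonneg _) hρ.le
            exact exp_le_exp.mpr (by nlinarith [hδ₀1])
          have h2 : ρ * exp L = r / 4 := by
            rw [hρdef]; field_simp
          have hxS' : dist (ψ x z) (ψ x y) ≤ dist z y * exp (L * x) := hxS
          linarith
        have hgx : dist (ψ x z) y ≤ r / 2 := by
          have := hψyconf x ⟨hx0, hxδ.le⟩
          have h2 := mem_closedBall.mp this
          calc dist (ψ x z) y ≤ dist (ψ x z) (ψ x y) + dist (ψ x y) y := dist_triangle _ _ _
            _ ≤ r / 4 + r / 4 := add_le_add hdx h2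
            _ = r / 2 := by ring
        -- continuity gives a little interval to the right where ψ · z stays in ball y r
        have hev : ∀ᶠ τ in nhds x, dist (ψ τ z) y < 3 * r / 4 := by
          have hc : ContinuousAt (fun τ => dist (ψ τ z) y) x :=
            ((htraj z).dist continuous_const).continuousAt
          exact hc.eventually_lt continuousAt_const (by linarith)
        obtain ⟨η', hη', hη'p⟩ := Metric.eventually_nhds_iff.mp hev
        set x' := min (x + η' / 2) (min δ₀ (x + 1)) with hx'def
        have hxx' : x < x' := by
          apply lt_min (by linarith)
          exact lt_min hxδ (by linarith)
        have hx'δ₀ : x' ≤ δ₀ := le_trans (min_le_right _ _) (min_le_left _ _)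
        have hx'η : x' ≤ x + η' / 2 := min_le_left _ _
        have hconf : ∀ τ ∈ Icc x x', ψ τ z ∈ closedBall y 1 := by
          intro τ hτ
          have : dist τ x < η' := by
            rw [Real.dist_eq, abs_of_nonneg (by linarith [hτ.1])]
            linarith [hτ.2, hx'η]
          have := hη'p this
          exact mem_closedBall.mpr (by linarith [hr1])
        have hconfy : ∀ τ ∈ Icc x x', ψ τ y ∈ closedBall y 1 := by
          intro τ hτ
          have := hψyconf τ ⟨le_trans hx0 hτ.1, le_trans hτ.2 hx'δ₀⟩
          exact closedBall_subset_closedBall (by linarith) this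
        -- Grönwall on [x, x']
        have hg := norm_le_gronwallBound_of_norm_deriv_right_le
          (f := fun τ => ψ τ z - ψ τ y) (f' := fun τ => w (ψ τ z) - w (ψ τ y))
          (δ := dist z y * exp (L * x)) (K := L) (ε := 0) (a := x) (b := x')
          (((htraj z).sub (htraj y)).continuousOn)
          (fun τ _ => ((hψflow z τ).sub (hψflow y τ)).hasDerivWithinAt)
          (by rw [← dist_eq_norm]; exact hxS)
          (by
            intro τ hτ
            rw [add_zero]
            exact hlip _ (hconfy τ (Ico_subset_Icc_self hτ)) _ (hconf τ (Ico_subset_Icc_self hτ)))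
        have hgx' := hg x' ⟨hxx'.le, le_rfl⟩
        rw [gronwallBound_ε0] at hgx'
        have hx'S : x' ∈ S := by
          show dist (ψ x' z) (ψ x' y) ≤ dist z y * exp (L * x')
          rw [dist_eq_norm]
          calc ‖ψ x' z - ψ x' y‖ ≤ dist z y * exp (L * x) * exp (L * (x' - x)) := hgx'
            _ = dist z y * exp (L * x') := by rw [mul_assoc, ← Real.exp_add]; ring_nf
        -- S contains a right-neighborhood of x
        have hIoo : Ioo x x' ⊆ S := by
          intro τ hτ
          have hgτ := hg τ ⟨hτ.1.le, hτ.2.le⟩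
          rw [gronwallBound_ε0] at hgτ
          show dist (ψ τ z) (ψ τ y) ≤ dist z y * exp (L * τ)
          rw [dist_eq_norm]
          calc ‖ψ τ z - ψ τ y‖ ≤ dist z y * exp (L * x) * exp (L * (τ - x)) := hgτ
            _ = dist z y * exp (L * τ) := by rw [mul_assoc, ← Real.exp_add]; ring_nf
        exact Filter.mem_of_superset (Ioo_mem_nhdsGT_of_mem ⟨le_rfl, hxx'⟩) hIoo
    exact fun s hs => key hs
  -- basic consequences of Grönwall
  have hGRON' : ∀ z ∈ closedBall y ρ, ∀ s ∈ Icc (0:ℝ) δ₀,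
      ‖ψ s z - ψ s y‖ ≤ ‖z - y‖ * exp L := by
    intro z hz s hs
    have h1 := hGRON z hz s hs
    rw [dist_eq_norm, dist_eq_norm] at h1
    have hsle : s ≤ 1 := hs.2.trans hδ₀1
    have h2 : exp (L * s) ≤ exp L := by
      apply exp_le_exp.mpr; nlinarith [hL0, hs.1]
    have h4 : ‖z - y‖ * exp (L * s) ≤ ‖z - y‖ * exp L :=
      mul_le_mul_of_nonneg_left h2 (norm_nonneg _)
    linarith
  have hconfz : ∀ z ∈ closedBall y ρ, ∀ s ∈ Icc (0:ℝ) δ₀, ψ s z ∈ closedBall y r := by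
    intro z hz s hs
    have h1 := hGRON z hz s hs
    have h2 : dist z y * exp (L * s) ≤ ρ * exp L := by
      apply mul_le_mul (mem_closedBall.mp hz) _ (exp_nonneg _) hρ.le
      have hsle : s ≤ 1 := hs.2.trans hδ₀1
      exact exp_le_exp.mpr (by nlinarith [hL0, hs.1])
    have h3 : ρ * exp L = r / 4 := by rw [hρdef]; field_simp
    have h4 := mem_closedBall.mp (hψyconf s hs)
    have : dist (ψ s z) y ≤ dist (ψ s z) (ψ s y) + dist (ψ s y) y := dist_triangle _ _ _
    exact mem_closedBall.mpr (by linarith)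
  have hconfy : ∀ s ∈ Icc (0:ℝ) δ₀, ψ s y ∈ closedBall y r := fun s hs =>
    closedBall_subset_closedBall (by linarith) (hψyconf s hs)
  have hcbr1 : closedBall y r ⊆ closedBall y 1 := closedBall_subset_closedBall hr1
  -- difference from initial separation
  have hEDIFF : ∀ z ∈ closedBall y ρ, ∀ s ∈ Icc (0:ℝ) δ₀,
      ‖(ψ s z - ψ s y) - (z - y)‖ ≤ L * exp L * ‖z - y‖ * δ₀ := by
    intro z hz s hs
    have int1 : IntervalIntegrable (fun τ => w (ψ τ z)) MeasureTheory.volume 0 s :=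
      (hwc.comp (htraj z)).intervalIntegrable 0 s
    have int2 : IntervalIntegrable (fun τ => w (ψ τ y)) MeasureTheory.volume 0 s :=
      (hwc.comp (htraj y)).intervalIntegrable 0 s
    have heq : (ψ s z - ψ s y) - (z - y) = ∫ τ in (0:ℝ)..s, (w (ψ τ z) - w (ψ τ y)) := by
      rw [intervalIntegral.integral_sub int1 int2, ← hFTC z s, ← hFTC y s]
      abel
    rw [heq]
    have hb := intervalIntegral.norm_integral_le_of_norm_le_const
      (C := L * exp L * ‖z - y‖) (a := (0:ℝ)) (b := s)
      (f := fun τ => w (ψ τ z) - w (ψ τ y)) ?_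
    · calc ‖∫ τ in (0:ℝ)..s, (w (ψ τ z) - w (ψ τ y))‖ ≤ L * exp L * ‖z - y‖ * |s - 0| := hb
        _ ≤ L * exp L * ‖z - y‖ * δ₀ := by
            apply mul_le_mul_of_nonneg_left _ (by positivity)
            rw [sub_zero, abs_of_nonneg hs.1]; exact hs.2
    · intro τ hτ
      rw [Set.uIoc_of_le hs.1] at hτ
      have hτ' : τ ∈ Icc (0:ℝ) δ₀ := ⟨hτ.1.le, le_trans hτ.2 hs.2⟩
      have h1 : ‖w (ψ τ z) - w (ψ τ y)‖ ≤ L * ‖ψ τ z - ψ τ y‖ :=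
        hlip _ (hcbr1 (hconfy τ hτ')) _ (hcbr1 (hconfz z hz τ hτ'))
      have h2 := hGRON' z hz τ hτ'
      nlinarith [norm_nonneg (ψ τ z - ψ τ y), hL0]
  -- the key functional estimate
  have hKEY : ∀ z ∈ closedBall y ρ, ∀ δ ∈ Icc (0:ℝ) δ₀,
      ‖(ψ δ z - z - δ • w z) - (ψ δ y - y - δ • w y)‖ ≤ ε₂ * δ * ‖z - y‖ := by
    intro z hz δ hδ
    have hzr : z ∈ closedBall y r := closedBall_subset_closedBall (by linarith) hz
    have int1 : IntervalIntegrable (fun s => w (ψ s z)) MeasureTheory.volume 0 δ :=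
      (hwc.comp (htraj z)).intervalIntegrable 0 δ
    have int2 : IntervalIntegrable (fun s => w (ψ s y)) MeasureTheory.volume 0 δ :=
      (hwc.comp (htraj y)).intervalIntegrable 0 δ
    have int3 : IntervalIntegrable (fun s => w (ψ s z) - w (ψ s y)) MeasureTheory.volume 0 δ :=
      int1.sub int2
    have heq : (ψ δ z - z - δ • w z) - (ψ δ y - y - δ • w y)
        = ∫ s in (0:ℝ)..δ, (w (ψ s z) - w (ψ s y) - (w z - w y)) := by
      rw [intervalIntegral.integral_sub int3 intervalIntegrable_const,
        intervalIntegral.integral_sub int1 int2,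
        intervalIntegral.integral_const, ← hFTC z δ, ← hFTC y δ, sub_zero, smul_sub]
      abel
    rw [heq]
    have hb := intervalIntegral.norm_integral_le_of_norm_le_const
      (C := ε₂ * ‖z - y‖) (a := (0:ℝ)) (b := δ)
      (f := fun s => w (ψ s z) - w (ψ s y) - (w z - w y)) ?_
    · calc ‖∫ s in (0:ℝ)..δ, (w (ψ s z) - w (ψ s y) - (w z - w y))‖
          ≤ ε₂ * ‖z - y‖ * |δ - 0| := hb
        _ = ε₂ * δ * ‖z - y‖ := by rw [sub_zero, abs_of_nonneg hδ.1]; ring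
    · intro s hs
      rw [Set.uIoc_of_le hδ.1] at hs
      have hs' : s ∈ Icc (0:ℝ) δ₀ := ⟨hs.1.le, le_trans hs.2 hδ.2⟩
      have hdecomp : w (ψ s z) - w (ψ s y) - (w z - w y)
          = (w (ψ s z) - w (ψ s y) - fderiv ℝ w y (ψ s z - ψ s y))
            + fderiv ℝ w y ((ψ s z - ψ s y) - (z - y))
            - (w z - w y - fderiv ℝ w y (z - y)) := by
        simp only [map_sub]; abel
      show ‖w (ψ s z) - w (ψ s y) - (w z - w y)‖ ≤ ε₂ * ‖z - y‖
      rw [hdecomp]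
      have t1 : ‖w (ψ s z) - w (ψ s y) - fderiv ℝ w y (ψ s z - ψ s y)‖
          ≤ ε₁ * ‖ψ s z - ψ s y‖ := h3 _ (hconfy s hs') _ (hconfz z hz s hs')
      have t1' : ‖ψ s z - ψ s y‖ ≤ ‖z - y‖ * exp L := hGRON' z hz s hs'
      have t2 : ‖fderiv ℝ w y ((ψ s z - ψ s y) - (z - y))‖
          ≤ L * (L * exp L * ‖z - y‖ * δ₀) := by
        calc ‖fderiv ℝ w y ((ψ s z - ψ s y) - (z - y))‖
            ≤ ‖fderiv ℝ w y‖ * ‖(ψ s z - ψ s y) - (z - y)‖ :=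
              (fderiv ℝ w y).le_opNorm _
          _ ≤ L * (L * exp L * ‖z - y‖ * δ₀) := by
              apply mul_le_mul (hLb y (mem_closedBall_self (by norm_num)))
                (hEDIFF z hz s hs') (norm_nonneg _) hL0
      have t3 : ‖w z - w y - fderiv ℝ w y (z - y)‖ ≤ ε₁ * ‖z - y‖ :=
        h3 _ (mem_closedBall_self hr.le) _ hzr
      have hε₁eq : ε₁ * (2 * (exp L + 1)) = ε₂ := div_mul_cancel₀ _ (by positivity)
      calc ‖(w (ψ s z) - w (ψ s y) - fderiv ℝ w y (ψ s z - ψ s y))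
            + fderiv ℝ w y ((ψ s z - ψ s y) - (z - y))
            - (w z - w y - fderiv ℝ w y (z - y))‖
          ≤ ‖(w (ψ s z) - w (ψ s y) - fderiv ℝ w y (ψ s z - ψ s y))
            + fderiv ℝ w y ((ψ s z - ψ s y) - (z - y))‖
            + ‖w z - w y - fderiv ℝ w y (z - y)‖ := norm_sub_le _ _
        _ ≤ ‖w (ψ s z) - w (ψ s y) - fderiv ℝ w y (ψ s z - ψ s y)‖
            + ‖fderiv ℝ w y ((ψ s z - ψ s y) - (z - y))‖
            + ‖w z - w y - fderiv ℝ w y (z - y)‖ := by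
              linarith [norm_add_le (w (ψ s z) - w (ψ s y) - fderiv ℝ w y (ψ s z - ψ s y))
                (fderiv ℝ w y ((ψ s z - ψ s y) - (z - y)))]
        _ ≤ ε₁ * (‖z - y‖ * exp L) + L * (L * exp L * ‖z - y‖ * δ₀) + ε₁ * ‖z - y‖ := by
              have : ε₁ * ‖ψ s z - ψ s y‖ ≤ ε₁ * (‖z - y‖ * exp L) :=
                mul_le_mul_of_nonneg_left t1' hε₁.le
              linarith
        _ ≤ ε₂ * ‖z - y‖ := by nlinarith [norm_nonneg (z - y), hδ₀ε, hε₁eq, hε₁.le,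
              (exp_nonneg L), hL0]
  -- conclusion
  have hIcc : Icc (0:ℝ) δ₀ ∈ nhdsWithin (0:ℝ) (Ici (0:ℝ)) :=
    Icc_mem_nhdsGE_of_mem ⟨le_rfl, hδ₀pos⟩
  filter_upwards [hIcc] with δ hδ
  have hψ0eq : fderiv ℝ (ψ 0) y = ContinuousLinearMap.id ℝ (Fin m → ℝ) := by
    have h0 : ψ 0 = fun z : Fin m → ℝ => z := funext hψ0
    rw [h0, fderiv_id']
  set Bδ : (Fin m → ℝ) →L[ℝ] (Fin m → ℝ) :=
    fderiv ℝ (ψ δ) y - ContinuousLinearMap.id ℝ (Fin m → ℝ) - δ • fderiv ℝ w y with hBdef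
  have hBderiv : HasFDerivAt (fun z => ψ δ z - z - δ • w z) Bδ y := by
    exact ((((hψsmooth δ).differentiable one_ne_zero) y).hasFDerivAt.sub
      (hasFDerivAt_id y)).sub (((hwd y).hasFDerivAt).const_smul δ)
  have hBle : ‖Bδ‖ ≤ ε₂ * δ := by
    apply hBderiv.le_of_lip' (mul_nonneg hε₂.le hδ.1)
    filter_upwards [closedBall_mem_nhds y hρ] with z hz
    exact hKEY z hz δ hδ
  have hBc : Bδ c = fderiv ℝ (ψ δ) y c - c - δ • fderiv ℝ w y c := by
    simp [hBdef, ContinuousLinearMap.sub_apply, ContinuousLinearMap.smul_apply]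
  have hεc : ε₂ * ‖c‖ ≤ C := by
    rw [hε₂def, div_mul_eq_mul_div, div_le_iff₀ (by positivity)]
    nlinarith [norm_nonneg c, hC.le]
  calc ‖fderiv ℝ (ψ δ) y c - fderiv ℝ (ψ 0) y c - (δ - 0) • fderiv ℝ w y c‖
      = ‖Bδ c‖ := by rw [hψ0eq, sub_zero, hBc]; simp
    _ ≤ ‖Bδ‖ * ‖c‖ := Bδ.le_opNorm c
    _ ≤ ε₂ * δ * ‖c‖ := mul_le_mul_of_nonneg_right hBle (norm_nonneg c)
    _ ≤ C * ‖δ - 0‖ := by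
        rw [sub_zero, Real.norm_eq_abs, abs_of_nonneg hδ.1]
        nlinarith [hδ.1, hεc, hε₂.le]

/-- Two-sided version: derivative at `0` of `δ ↦ D(ψ δ)(y) c` equals `Dw(y) c`. -/
lemma pushforward_hasDerivAt {m : ℕ}
    (w : (Fin m → ℝ) → (Fin m → ℝ)) (hw : ContDiff ℝ 1 w)
    (ψ : ℝ → (Fin m → ℝ) → (Fin m → ℝ))
    (hψ0 : ∀ x, ψ 0 x = x)
    (hψflow : ∀ x t, HasDerivAt (fun s => ψ s x) (w (ψ t x)) t)
    (hψsmooth : ∀ ε : ℝ, ContDiff ℝ 1 (ψ ε))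
    (y c : Fin m → ℝ) :
    HasDerivAt (fun δ => fderiv ℝ (ψ δ) y c) (fderiv ℝ w y c) 0 := by
  have hIci := pushforward_hasDerivWithinAt_Ici w hw ψ hψ0 hψflow hψsmooth y c
  -- reversed flow
  set ψ' : ℝ → (Fin m → ℝ) → (Fin m → ℝ) := fun δ z => ψ (-δ) z with hψ'def
  have hψ'0 : ∀ x, ψ' 0 x = x := by intro x; show ψ (-0) x = x; rw [neg_zero]; exact hψ0 x
  have hψ'flow : ∀ x t, HasDerivAt (fun s => ψ' s x) ((fun z => -w z) (ψ' t x)) t := by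
    intro x t
    have hbase : HasDerivAt (fun s => ψ s x) (w (ψ (-t) x)) (-t) := hψflow x (-t)
    have hneg : HasDerivAt (fun s : ℝ => -s) (-1 : ℝ) t := (hasDerivAt_id t).neg
    have := hbase.scomp t hneg
    rw [neg_one_smul] at this
    exact this
  have hψ'smooth : ∀ ε : ℝ, ContDiff ℝ 1 (ψ' ε) := fun ε => hψsmooth (-ε)
  have hw' : ContDiff ℝ 1 (fun z => -w z) := hw.neg
  have hIci' := pushforward_hasDerivWithinAt_Ici (fun z => -w z) hw' ψ' hψ'0 hψ'flow
    hψ'smooth y c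
  have hfneg : fderiv ℝ (fun z => -w z) y c = -(fderiv ℝ w y c) := by
    rw [fderiv_fun_neg]; simp
  rw [hfneg] at hIci'
  -- turn hIci' into the Iic-side derivative of the original function
  have hIic : HasDerivWithinAt (fun δ => fderiv ℝ (ψ δ) y c) (fderiv ℝ w y c)
      (Set.Iic (0:ℝ)) 0 := by
    have hneg : HasDerivWithinAt (fun δ : ℝ => -δ) (-1 : ℝ) (Set.Iic (0:ℝ)) 0 :=
      ((hasDerivAt_id (0:ℝ)).neg).hasDerivWithinAt
    have hmaps : Set.MapsTo (fun δ : ℝ => -δ) (Set.Iic (0:ℝ)) (Set.Ici (0:ℝ)) :=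
      fun δ hδ => by simpa using neg_nonneg.mpr (Set.mem_Iic.mp hδ)
    have hIci'' : HasDerivWithinAt (fun δ => fderiv ℝ (ψ' δ) y c)
        (-(fderiv ℝ w y c)) (Set.Ici (0:ℝ)) ((fun δ : ℝ => -δ) 0) := by
      simpa using hIci'
    have hcomp := hIci''.scomp 0 hneg hmaps
    have : ((-1 : ℝ) • -(fderiv ℝ w y c)) = fderiv ℝ w y c := by simp
    rw [this] at hcomp
    apply hcomp.congr
    · intro δ _
      show fderiv ℝ (ψ δ) y c = fderiv ℝ (ψ (- -δ)) y c
      rw [neg_neg]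
    · show fderiv ℝ (ψ 0) y c = fderiv ℝ (ψ (- -0)) y c
      rw [neg_neg]
  have := hIic.union hIci
  rwa [Set.Iic_union_Ici, hasDerivWithinAt_univ] at this

/-- Uniqueness for the linear ODE `k' = a k`, nonnegative times. -/
lemma ode_zero_nonneg {m : ℕ} (k : ℝ → (Fin m → ℝ)) (a : ℝ → ((Fin m → ℝ) →L[ℝ] (Fin m → ℝ)))
    (ha : Continuous a) (hk : ∀ s, HasDerivAt k (a s (k s)) s) (h0 : k 0 = 0) :
    ∀ t ≥ (0:ℝ), k t = 0 := by
  intro t ht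
  obtain ⟨K₀, hK₀⟩ := (isCompact_Icc (a := (0:ℝ)) (b := t)).exists_bound_of_continuousOn
    ha.continuousOn
  set K := max K₀ 0 with hKdef
  have hg := norm_le_gronwallBound_of_norm_deriv_right_le (f := k) (f' := fun s => a s (k s))
    (δ := 0) (K := K) (ε := 0) (a := 0) (b := t)
    (by
      have hdk : Differentiable ℝ k := fun s => (hk s).differentiableAt
      exact hdk.continuous.continuousOn)
    (fun s _ => (hk s).hasDerivWithinAt)
    (by rw [h0]; simp)
    (by
      intro s hs
      rw [add_zero]
      calc ‖a s (k s)‖ ≤ ‖a s‖ * ‖k s‖ := (a s).le_opNorm _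
        _ ≤ K * ‖k s‖ := mul_le_mul_of_nonneg_right
            ((hK₀ s (Set.Ico_subset_Icc_self hs)).trans (le_max_left _ _)) (norm_nonneg _))
  have := hg t ⟨ht, le_rfl⟩
  rw [gronwallBound_ε0] at this
  simpa using norm_le_zero_iff.mp (by simpa using this)

lemma ode_zero {m : ℕ} (k : ℝ → (Fin m → ℝ)) (a : ℝ → ((Fin m → ℝ) →L[ℝ] (Fin m → ℝ)))
    (ha : Continuous a) (hk : ∀ s, HasDerivAt k (a s (k s)) s) (h0 : k 0 = 0) :
    ∀ t, k t = 0 := by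
  intro t
  rcases le_or_gt 0 t with h | h
  · exact ode_zero_nonneg k a ha hk h0 t h
  · have hk' : ∀ s, HasDerivAt (fun u => k (-u)) ((-(a (-s)).comp (ContinuousLinearMap.id ℝ _))
        ((fun u => k (-u)) s)) s := by
      intro s
      have hbase : HasDerivAt k (a (-s) (k (-s))) (-s) := hk (-s)
      have hneg : HasDerivAt (fun u : ℝ => -u) (-1 : ℝ) s := (hasDerivAt_id s).neg
      have := hbase.scomp s hneg
      exact this.congr_deriv (by simp)
    have := ode_zero_nonneg (fun u => k (-u))
      (fun s => -(a (-s)).comp (ContinuousLinearMap.id ℝ _))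
      (by
        have : Continuous fun s : ℝ => a (-s) := ha.comp continuous_neg
        fun_prop)
      hk' (by simpa using h0) (-t) (by linarith)
    simpa using this

/-- If `[v,w] = 0` then `v` is invariant under the flow of `w`:
`D(ψ ε)(x)(v x) = v (ψ ε x)`. -/
lemma flow_related {m : ℕ} (v w : (Fin m → ℝ) → (Fin m → ℝ))
    (hv : ContDiff ℝ 1 v) (hw : ContDiff ℝ 1 w)
    (hbracket : ∀ x : Fin m → ℝ, fderiv ℝ w x (v x) - fderiv ℝ v x (w x) = 0)
    (ψ : ℝ → (Fin m → ℝ) → (Fin m → ℝ))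
    (hψ0 : ∀ x, ψ 0 x = x)
    (hψadd : ∀ s t x, ψ (s + t) x = ψ s (ψ t x))
    (hψflow : ∀ x t, HasDerivAt (fun s => ψ s x) (w (ψ t x)) t)
    (hψsmooth : ∀ ε : ℝ, ContDiff ℝ 1 (ψ ε)) :
    ∀ (ε : ℝ) (x : Fin m → ℝ), fderiv ℝ (ψ ε) x (v x) = v (ψ ε x) := by
  have hwd : Differentiable ℝ w := hw.differentiable one_ne_zero
  have hvd : Differentiable ℝ v := hv.differentiable one_ne_zero
  have hψd : ∀ ε : ℝ, Differentiable ℝ (ψ ε) := fun ε => (hψsmooth ε).differentiable one_ne_zero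
  have htraj : ∀ z, Continuous fun s => ψ s z := by
    intro z
    have hd : Differentiable ℝ (fun s => ψ s z) := fun t => (hψflow z t).differentiableAt
    exact hd.continuous
  intro ε x
  -- the function whose vanishing we must show
  set k : ℝ → (Fin m → ℝ) := fun s => fderiv ℝ (ψ s) x (v x) - v (ψ s x) with hkdef
  have hk0 : k 0 = 0 := by
    have h0 : ψ 0 = fun z : Fin m → ℝ => z := funext hψ0
    simp [hkdef, h0, fderiv_id', hψ0]
  -- chain rule for the group law
  have hgroup : ∀ s s' : ℝ, fderiv ℝ (ψ s') x (v x)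
      = fderiv ℝ (ψ (s' - s)) (ψ s x) (fderiv ℝ (ψ s) x (v x)) := by
    intro s s'
    have hsplit : ψ s' = fun z => ψ (s' - s) (ψ s z) := by
      funext z
      rw [← hψadd (s' - s) s z, sub_add_cancel]
    have : fderiv ℝ (ψ s') x = (fderiv ℝ (ψ (s' - s)) (ψ s x)).comp (fderiv ℝ (ψ s) x) := by
      rw [hsplit]
      exact fderiv_comp x (hψd (s' - s) (ψ s x)) (hψd s x)
    rw [this]; rfl
  -- the ODE for k
  have hk' : ∀ s, HasDerivAt k (fderiv ℝ w (ψ s x) (k s)) s := by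
    intro s
    have h1 : HasDerivAt (fun s' => fderiv ℝ (ψ s') x (v x))
        (fderiv ℝ w (ψ s x) (fderiv ℝ (ψ s) x (v x))) s := by
      have hbase := pushforward_hasDerivAt w hw ψ hψ0 hψflow hψsmooth (ψ s x)
        (fderiv ℝ (ψ s) x (v x))
      have hsub : HasDerivAt (fun s' : ℝ => s' - s) (1 : ℝ) s := by
        simpa using (hasDerivAt_id s).sub_const s
      have hbase' : HasDerivAt (fun δ => fderiv ℝ (ψ δ) (ψ s x) (fderiv ℝ (ψ s) x (v x)))
          (fderiv ℝ w (ψ s x) (fderiv ℝ (ψ s) x (v x))) ((fun s' : ℝ => s' - s) s) := by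
        simpa using hbase
      have hcomp := HasDerivAt.scomp (h := fun s' : ℝ => s' - s) s hbase' hsub
      rw [one_smul] at hcomp
      have hfun : (fun s' => fderiv ℝ (ψ (s' - s)) (ψ s x) (fderiv ℝ (ψ s) x (v x)))
          = fun s' => fderiv ℝ (ψ s') x (v x) := by
        funext s'
        exact (hgroup s s').symm
      rw [← hfun]
      exact hcomp
    have h2 : HasDerivAt (fun s' => v (ψ s' x)) (fderiv ℝ v (ψ s x) (w (ψ s x))) s :=
      (hvd (ψ s x)).hasFDerivAt.comp_hasDerivAt s (hψflow x s)
    have h2' : HasDerivAt (fun s' => v (ψ s' x)) (fderiv ℝ w (ψ s x) (v (ψ s x))) s := by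
      have := hbracket (ψ s x)
      rwa [← sub_eq_zero.mp this] at h2
    have := h1.sub h2'
    rwa [← map_sub (fderiv ℝ w (ψ s x))] at this
  -- uniqueness
  have ha : Continuous fun s => fderiv ℝ w (ψ s x) :=
    (hw.continuous_fderiv one_ne_zero).comp (htraj x)
  have := ode_zero k (fun s => fderiv ℝ w (ψ s x)) ha hk' hk0 ε
  exact sub_eq_zero.mp this

end AuxLemmas

/-- If `[v, w] = 0` and `π` is invariant under `w` (`Dπ(x)(w(x)) = 0`),
then the projected velocity `Dπ(x)(v(x))` is constant along the orbits of `w`. -/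
theorem projected_velocity_constant_on_orbits
    {m n : ℕ} (v w : (Fin m → ℝ) → (Fin m → ℝ))
    (hv : ContDiff ℝ 1 v) (hw : ContDiff ℝ 1 w)
    (hbracket : ∀ x : Fin m → ℝ, fderiv ℝ w x (v x) - fderiv ℝ v x (w x) = 0)
    (ψ : ℝ → (Fin m → ℝ) → (Fin m → ℝ))
    (hψ0 : ∀ x, ψ 0 x = x)
    (hψadd : ∀ s t x, ψ (s + t) x = ψ s (ψ t x))
    (hψflow : ∀ x t, HasDerivAt (fun s => ψ s x) (w (ψ t x)) t)
    (hψsmooth : ∀ ε : ℝ, ContDiff ℝ 1 (ψ ε))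
    (π : (Fin m → ℝ) → (Fin n → ℝ)) (hπ : Differentiable ℝ π)
    (hinv : ∀ x : Fin m → ℝ, fderiv ℝ π x (w x) = 0) :
    ∀ (ε : ℝ) (x : Fin m → ℝ),
      fderiv ℝ π (ψ ε x) (v (ψ ε x)) = fderiv ℝ π x (v x) := by
  intro ε x
  have hrel := flow_related v w hv hw hbracket ψ hψ0 hψadd hψflow hψsmooth ε x
  -- π is invariant along the flow
  have hπconst : ∀ (z : Fin m → ℝ) (s : ℝ), π (ψ s z) = π z := by
    intro z s
    have hp : ∀ t, HasDerivAt (fun u => π (ψ u z)) 0 t := by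
      intro t
      have := (hπ (ψ t z)).hasFDerivAt.comp_hasDerivAt t (hψflow z t)
      rwa [hinv (ψ t z)] at this
    have hdiff : Differentiable ℝ (fun u => π (ψ u z)) := fun t => (hp t).differentiableAt
    have hderiv : ∀ t, deriv (fun u => π (ψ u z)) t = 0 := fun t => (hp t).deriv
    have := is_const_of_deriv_eq_zero hdiff hderiv s 0
    rwa [hψ0] at this
  have hcompeq : (fun z => π (ψ ε z)) = π := funext fun z => hπconst z ε
  have hchain : fderiv ℝ (fun z => π (ψ ε z)) x
      = (fderiv ℝ π (ψ ε x)).comp (fderiv ℝ (ψ ε) x) :=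
    fderiv_comp x (hπ (ψ ε x)) (((hψsmooth ε).differentiable one_ne_zero) x)
  calc fderiv ℝ π (ψ ε x) (v (ψ ε x))
      = fderiv ℝ π (ψ ε x) (fderiv ℝ (ψ ε) x (v x)) := by rw [hrel]
    _ = fderiv ℝ (fun z => π (ψ ε z)) x (v x) := by rw [hchain]; rfl
    _ = fderiv ℝ π x (v x) := by rw [hcompeq]
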